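/- Let a, d be complex numbers with d ≠ 0, let N be a positive integer, and let k ≥ 3 be an integer. Let M be the (k+1)×(k+1) matrix whose (i, j) entry for 1 ≤ j ≤ min(i, k) is C(i, j−1)·d^{i−j+1}, whose (i, j) entries with j ≤ k and j > i are zero, and whose last column has entries M_{i,k+1} = (a + N·d)^i − a^i for i = 1, …, k+1. Then det(M) = k! · d^k · S^{k−2}_{k+1}. -/

import Mathlib

/-- The quantities `S^j_n` from the paper: `S a d N j n` is `S^j_n`. -/
noncomputable def S (a d : ℂ) (N : ℕ) : ℕ → ℕ → ℂ
  | 0, m =>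
      ((m : ℂ) / 2 - 1) * (N : ℂ) * d ^ m
        - ((m : ℂ) / 2) * d ^ (m - 2) * ((a + (N : ℂ) * d) ^ 2 - a ^ 2)
        + (a + (N : ℂ) * d) ^ m - a ^ m
  | j + 1, n =>
      -(n.choose (j + 2) : ℂ) * (1 / ((j : ℂ) + 3)) * d ^ (n - j - 3)
          * S a d N j (j + 3)
        + S a d N j n


open Finset in
lemma telescope (a d : ℂ) (N : ℕ) (m : ℕ) :
    (a + (N : ℂ) * d) ^ m - a ^ m
      = ∑ j ∈ range m, (m.choose j : ℂ) * d ^ (m - j)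
          * ∑ r ∈ range N, (a + (r : ℂ) * d) ^ j := by
  have h1 : ∀ x : ℂ, (x + d) ^ m - x ^ m
      = ∑ j ∈ range m, (m.choose j : ℂ) * d ^ (m - j) * x ^ j := by
    intro x
    rw [add_pow, Finset.sum_range_succ]
    simp only [Nat.choose_self, Nat.sub_self, pow_zero, Nat.cast_one, mul_one, one_mul]
    rw [add_sub_cancel_right]
    exact Finset.sum_congr rfl fun j hj => by ring
  have h2 : (a + (N : ℂ) * d) ^ m - a ^ m
      = ∑ r ∈ range N, ((a + ((r : ℂ) + 1) * d) ^ m - (a + (r : ℂ) * d) ^ m) := by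
    rw [show (∑ r ∈ range N, ((a + ((r : ℂ) + 1) * d) ^ m - (a + (r : ℂ) * d) ^ m))
        = ∑ r ∈ range N, ((fun s : ℕ => (a + (s : ℂ) * d) ^ m) (r + 1)
            - (fun s : ℕ => (a + (s : ℂ) * d) ^ m) r) from
      Finset.sum_congr rfl fun r _ => by push_cast; ring_nf]
    rw [Finset.sum_range_sub (f := fun s : ℕ => (a + (s : ℂ) * d) ^ m)]
    norm_num
  rw [h2]
  have h3 : ∀ r : ℕ, (a + ((r : ℂ) + 1) * d) ^ m - (a + (r : ℂ) * d) ^ m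
      = ∑ j ∈ range m, (m.choose j : ℂ) * d ^ (m - j) * (a + (r : ℂ) * d) ^ j := by
    intro r
    have := h1 (a + (r : ℂ) * d)
    rw [← this]; ring_nf
  rw [Finset.sum_congr rfl fun r _ => h3 r, Finset.sum_comm]
  exact Finset.sum_congr rfl fun j _ => by rw [Finset.mul_sum]

open Finset in
lemma Sform (a d : ℂ) (N : ℕ) : ∀ j n : ℕ, j + 3 ≤ n →
    S a d N j n = ∑ t ∈ Finset.Ico (j + 2) n, (n.choose t : ℂ) * d ^ (n - t)
        * ∑ r ∈ range N, (a + (r : ℂ) * d) ^ t := by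
  intro j
  induction j with
  | zero =>
    intro n hn
    show ((n : ℂ) / 2 - 1) * (N : ℂ) * d ^ n
        - ((n : ℂ) / 2) * d ^ (n - 2) * ((a + (N : ℂ) * d) ^ 2 - a ^ 2)
        + (a + (N : ℂ) * d) ^ n - a ^ n = _
    rw [telescope a d N 2]
    have h2 : ∑ j ∈ range 2, ((2).choose j : ℂ) * d ^ (2 - j)
          * ∑ r ∈ range N, (a + (r : ℂ) * d) ^ j
        = d ^ 2 * (N : ℂ) + 2 * d * ∑ r ∈ range N, (a + (r : ℂ) * d) := by
      rw [Finset.sum_range_succ, Finset.sum_range_one]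
      simp [pow_one]
    rw [h2, add_sub_assoc, telescope a d N n]
    have hsplit : ∑ t ∈ range n, ((n).choose t : ℂ) * d ^ (n - t)
          * ∑ r ∈ range N, (a + (r : ℂ) * d) ^ t
        = (d ^ n * (N : ℂ) + (n : ℂ) * d ^ (n - 1) * ∑ r ∈ range N, (a + (r : ℂ) * d))
          + ∑ t ∈ Finset.Ico 2 n, ((n).choose t : ℂ) * d ^ (n - t)
              * ∑ r ∈ range N, (a + (r : ℂ) * d) ^ t := by
      rw [range_eq_Ico, ← Finset.sum_Ico_consecutive _ (by omega : 0 ≤ 2) (by omega : 2 ≤ n)]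
      congr 1
      rw [show Finset.Ico 0 2 = range 2 from (range_eq_Ico 2).symm,
        Finset.sum_range_succ, Finset.sum_range_one]
      simp [pow_one]
    rw [hsplit]
    have e1 : d ^ (n - 2) * d ^ 2 = d ^ n := by
      rw [← pow_add]; congr 1; omega
    have e2 : d ^ (n - 2) * d = d ^ (n - 1) := by
      rw [← pow_succ]; congr 1; omega
    set Q := ∑ r ∈ range N, (a + (r : ℂ) * d)
    set R := ∑ t ∈ Finset.Ico 2 n, ((n).choose t : ℂ) * d ^ (n - t)
        * ∑ r ∈ range N, (a + (r : ℂ) * d) ^ t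
    rw [← e1, ← e2]
    ring
  | succ j ih =>
    intro n hn
    show -(n.choose (j + 2) : ℂ) * (1 / ((j : ℂ) + 3)) * d ^ (n - j - 3)
          * S a d N j (j + 3) + S a d N j n = _
    rw [ih (j + 3) le_rfl, ih n (by omega)]
    have hsingle : Finset.Ico (j + 2) (j + 3) = {j + 2} := by
      rw [show j + 3 = j + 2 + 1 from rfl, Finset.Ico_add_one_right_eq_Icc, Finset.Icc_self]
    rw [hsingle, Finset.sum_singleton, Nat.choose_succ_self_right]
    have hsplit : ∑ t ∈ Finset.Ico (j + 2) n, (n.choose t : ℂ) * d ^ (n - t)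
          * ∑ r ∈ range N, (a + (r : ℂ) * d) ^ t
        = (n.choose (j + 2) : ℂ) * d ^ (n - (j + 2))
            * (∑ r ∈ range N, (a + (r : ℂ) * d) ^ (j + 2))
          + ∑ t ∈ Finset.Ico (j + 3) n, (n.choose t : ℂ) * d ^ (n - t)
              * ∑ r ∈ range N, (a + (r : ℂ) * d) ^ t := by
      rw [Finset.sum_eq_sum_Ico_succ_bot (by omega : j + 2 < n)]
    rw [hsplit]
    have hj3 : ((j : ℂ) + 3) ≠ 0 := by
      have h := Nat.cast_ne_zero (R := ℂ).mpr (show j + 3 ≠ 0 by omega)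
      push_cast at h
      exact h
    have hcast : ((j + 2 + 1 : ℕ) : ℂ) = (j : ℂ) + 3 := by push_cast; ring
    have epow : d ^ (n - j - 3) * d = d ^ (n - (j + 2)) := by
      rw [← pow_succ]; congr 1; omega
    have hexp : (j + 3) - (j + 2) = 1 := by omega
    rw [hexp, hcast, pow_one]
    set Q := ∑ r ∈ range N, (a + (r : ℂ) * d) ^ (j + 2)
    rw [← epow]
    field_simp
    ring

open Finset in
theorem det_part
    (a d : ℂ) (N : ℕ) (k : ℕ) (hk : 3 ≤ k)
    (M : Matrix (Fin (k + 1)) (Fin (k + 1)) ℂ)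
    (hM : ∀ i j : Fin (k + 1),
      M i j =
        if (j : ℕ) = k then (a + (N : ℂ) * d) ^ ((i : ℕ) + 1) - a ^ ((i : ℕ) + 1)
        else if (j : ℕ) ≤ (i : ℕ)
          then (((i : ℕ) + 1).choose (j : ℕ) : ℂ) * d ^ ((i : ℕ) - (j : ℕ) + 1)
          else 0) :
    M.det = (k.factorial : ℂ) * d ^ k
      * (((k : ℂ) + 1) * d * ∑ r ∈ range N, (a + (r : ℂ) * d) ^ k) := by
  set P : ℕ → ℂ := fun t => ∑ r ∈ range N, (a + (r : ℂ) * d) ^ t with hP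
  have hPdef : ∀ t, (∑ r ∈ range N, (a + (r : ℂ) * d) ^ t) = P t := fun t => rfl
  set M₀ : Matrix (Fin (k + 1)) (Fin (k + 1)) ℂ := Matrix.of fun i j =>
    if (j : ℕ) = k then (if (i : ℕ) = k then ((k : ℂ) + 1) * d * P k else 0)
    else if (j : ℕ) ≤ (i : ℕ)
      then (((i : ℕ) + 1).choose (j : ℕ) : ℂ) * d ^ ((i : ℕ) - (j : ℕ) + 1)
      else 0 with hM₀
  set c : Fin (k + 1) → ℂ := fun j => if (j : ℕ) = k then 1 else P (j : ℕ) with hc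
  -- the key linear-combination identity for the last column
  have hrow : ∀ i : Fin (k + 1),
      M i (Fin.last k) = ∑ j : Fin (k + 1), c j * M₀ i j := by
    intro i
    rw [Fin.sum_univ_castSucc]
    have hlastterm : c (Fin.last k) * M₀ i (Fin.last k)
        = if (i : ℕ) = k then ((k : ℂ) + 1) * d * P k else 0 := by
      simp [hc, hM₀, Fin.val_last]
    have hsmall : ∀ j : Fin k, c j.castSucc * M₀ i j.castSucc
        = if (j : ℕ) ≤ (i : ℕ)
            then (((i : ℕ) + 1).choose (j : ℕ) : ℂ) * d ^ ((i : ℕ) - (j : ℕ) + 1) * P (j : ℕ)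
            else 0 := by
      intro j
      have hjk : (j : ℕ) ≠ k := by
        have := j.isLt; omega
      simp only [hc, hM₀, Matrix.of_apply, Fin.coe_castSucc, if_neg hjk]
      split_ifs <;> ring
    rw [Finset.sum_congr rfl fun j _ => hsmall j, hlastterm]
    rw [Fin.sum_univ_eq_sum_range (fun j =>
      if j ≤ (i : ℕ)
        then (((i : ℕ) + 1).choose j : ℂ) * d ^ ((i : ℕ) - j + 1) * P j
        else 0)]
    rw [hM i (Fin.last k), if_pos (Fin.val_last k), telescope a d N ((i : ℕ) + 1)]
    simp only [hPdef]
    have hgen : ∀ m : ℕ, m < k →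
        (∑ j ∈ range k, if j ≤ m then ((m + 1).choose j : ℂ) * d ^ (m - j + 1) * P j else 0)
          = ∑ j ∈ range (m + 1), ((m + 1).choose j : ℂ) * d ^ (m + 1 - j) * P j := by
      intro m hm
      calc (∑ j ∈ range k, if j ≤ m then ((m + 1).choose j : ℂ) * d ^ (m - j + 1) * P j else 0)
          = ∑ j ∈ range k, (if j ∈ range (m + 1) then
              ((m + 1).choose j : ℂ) * d ^ (m - j + 1) * P j else 0) := by
            refine Finset.sum_congr rfl fun j _ => ?_
            congr 1
            simp [Nat.lt_succ_iff]
        _ = ∑ j ∈ range k ∩ range (m + 1),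
              ((m + 1).choose j : ℂ) * d ^ (m - j + 1) * P j := by
            rw [Finset.sum_ite_mem]
        _ = ∑ j ∈ range (m + 1), ((m + 1).choose j : ℂ) * d ^ (m - j + 1) * P j := by
            congr 1
            ext x
            simp
            omega
        _ = ∑ j ∈ range (m + 1), ((m + 1).choose j : ℂ) * d ^ (m + 1 - j) * P j := by
            refine Finset.sum_congr rfl fun j hj => ?_
            simp only [Finset.mem_range] at hj
            rw [show m - j + 1 = m + 1 - j from by omega]
    by_cases hik : (i : ℕ) = k
    · rw [if_pos hik, hik]
      rw [Finset.sum_range_succ]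
      have hall : (∑ j ∈ range k,
            if j ≤ k then ((k + 1).choose j : ℂ) * d ^ (k - j + 1) * P j else 0)
          = ∑ j ∈ range k, ((k + 1).choose j : ℂ) * d ^ (k + 1 - j) * P j := by
        refine Finset.sum_congr rfl fun j hj => ?_
        simp only [Finset.mem_range] at hj
        rw [if_pos (by omega), show k - j + 1 = k + 1 - j from by omega]
      rw [hall, Nat.choose_succ_self_right, show k + 1 - k = 1 from by omega, pow_one]
      push_cast
      ring
    · have hik' : (i : ℕ) < k := by have := i.isLt; omega
      rw [if_neg hik, add_zero, hgen (i : ℕ) hik']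
  -- M is M₀ with its last column replaced by a linear combination of M₀'s columns
  have hMeq : M = M₀.updateCol (Fin.last k) (fun i => ∑ j : Fin (k + 1), c j • M₀ i j) := by
    ext i j
    by_cases hj : j = Fin.last k
    · subst hj
      rw [Matrix.updateCol_self]
      simpa using hrow i
    · rw [Matrix.updateCol_ne hj]
      have hjk : (j : ℕ) ≠ k := fun h => hj (Fin.ext (by simp [h, Fin.val_last]))
      rw [hM i j, if_neg hjk]
      simp [hM₀, if_neg hjk]
  have hdet : M.det = M₀.det := by
    rw [hMeq, Matrix.det_updateCol_sum M₀ (Fin.last k) c]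
    simp [hc, Fin.val_last]
  -- M₀ is lower triangular
  have htri : M₀.det = ∏ i : Fin (k + 1), M₀ i i := by
    refine Matrix.det_of_lowerTriangular M₀ ?_
    intro i j hij
    have hij' : (i : ℕ) < (j : ℕ) := hij
    have hjlt := j.isLt
    simp only [hM₀, Matrix.of_apply]
    split_ifs with h1 h2 h3 <;> first | rfl | (exfalso; omega)
  rw [hdet, htri, Fin.prod_univ_castSucc]
  have hdiag : ∀ i : Fin k, M₀ i.castSucc i.castSucc = ((i : ℂ) + 1) * d := by
    intro i
    have hik : (i : ℕ) ≠ k := by have := i.isLt; omega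
    simp only [hM₀, Matrix.of_apply, Fin.coe_castSucc, if_neg hik, if_pos le_rfl, Nat.sub_self,
      Nat.choose_succ_self_right, zero_add, pow_one]
    push_cast
    ring
  have hlast : M₀ (Fin.last k) (Fin.last k) = ((k : ℂ) + 1) * d * P k := by
    simp [hM₀, Fin.val_last]
  rw [hlast, Finset.prod_congr rfl fun i _ => hdiag i]
  rw [Finset.prod_mul_distrib, Finset.prod_const, Finset.card_univ, Fintype.card_fin]
  have hfact : (∏ i : Fin k, ((i : ℂ) + 1)) = (k.factorial : ℂ) := by
    rw [Fin.prod_univ_eq_prod_range (fun i => ((i : ℂ) + 1))]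
    rw [← Finset.prod_range_add_one_eq_factorial]
    push_cast
    rfl
  rw [hfact, hPdef]

theorem augmented_matrix_det
    (a d : ℂ) (hd : d ≠ 0) (N : ℕ) (hN : 0 < N) (k : ℕ) (hk : 3 ≤ k)
    (M : Matrix (Fin (k + 1)) (Fin (k + 1)) ℂ)
    (hM : ∀ i j : Fin (k + 1),
      M i j =
        if (j : ℕ) = k then (a + (N : ℂ) * d) ^ ((i : ℕ) + 1) - a ^ ((i : ℕ) + 1)
        else if (j : ℕ) ≤ (i : ℕ)
          then (((i : ℕ) + 1).choose (j : ℕ) : ℂ) * d ^ ((i : ℕ) - (j : ℕ) + 1)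
          else 0) :
    M.det = (k.factorial : ℂ) * d ^ k * S a d N (k - 2) (k + 1) := by
  rw [det_part a d N k hk M hM, Sform a d N (k - 2) (k + 1) (by omega)]
  have h1 : k - 2 + 2 = k := by omega
  have h2 : Finset.Ico (k - 2 + 2) (k + 1) = {k} := by
    rw [h1, Finset.Ico_add_one_right_eq_Icc, Finset.Icc_self]
  rw [h2, Finset.sum_singleton, Nat.choose_succ_self_right,
    show k + 1 - k = 1 from by omega, pow_one]
  push_cast
  ring
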